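/- Let H : ℝ^d × ℝ^d → ℝ be C¹ with partial gradients ∇₁H, ∇₂H, let 𝔅 be a symmetric real d×d matrix, and let η > 0. For a sequence U ∈ (ℝ^d)^ℤ set δH[U]_j = ∇₁H(U_j, η(U_{j+1} − U_j)) + η[∇₂H(U_{j−1}, η(U_j − U_{j−1})) − ∇₂H(U_j, η(U_{j+1} − U_j))] and (J V)_j = (η/2) 𝔅 (V_{j+1} − V_{j−1}). If U : ℝ → (ℝ^d)^ℤ is componentwise differentiable and satisfies dU_j/dt = (J δH[U(t)])_j for all j ∈ ℤ and t ∈ ℝ, then for all j and t the local conservation law d/dt H(U_j(t), η(U_{j+1}(t) − U_j(t))) = η (s_{j+1}(t) − s_j(t)) holds, where s_j = ½ δH[U]_{j−1} · 𝔅 δH[U]_j + ∇₂H(U_{j−1}, η(U_j − U_{j−1})) · (J δH[U])_j. -/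

import Mathlib

/-- First partial gradient `∇₁H` of `H : ℝ^d × ℝ^d → ℝ`. -/
noncomputable def grad1 {d : ℕ} (H : (Fin d → ℝ) → (Fin d → ℝ) → ℝ) (x y : Fin d → ℝ) :
    Fin d → ℝ :=
  fun i => fderiv ℝ (fun x' => H x' y) x (Pi.single i 1)

/-- Second partial gradient `∇₂H` of `H : ℝ^d × ℝ^d → ℝ`. -/
noncomputable def grad2 {d : ℕ} (H : (Fin d → ℝ) → (Fin d → ℝ) → ℝ) (x y : Fin d → ℝ) :
    Fin d → ℝ :=
  fun i => fderiv ℝ (fun y' => H x y') y (Pi.single i 1)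

/-- The discrete variational derivative
`δH[U]_j = ∇₁H(U_j, η(U_{j+1}−U_j)) + η[∇₂H(U_{j−1}, η(U_j−U_{j−1})) − ∇₂H(U_j, η(U_{j+1}−U_j))]`. -/
noncomputable def deltaH {d : ℕ} (η : ℝ) (H : (Fin d → ℝ) → (Fin d → ℝ) → ℝ)
    (U : ℤ → Fin d → ℝ) (j : ℤ) : Fin d → ℝ :=
  grad1 H (U j) (η • (U (j+1) - U j))
    + η • (grad2 H (U (j-1)) (η • (U j - U (j-1))) - grad2 H (U j) (η • (U (j+1) - U j)))

/-- The local energy flux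
`s_j = ½ δH[U]_{j−1} · 𝔅 δH[U]_j + ∇₂H(U_{j−1}, η(U_j−U_{j−1})) · (J δH[U])_j`. -/
noncomputable def energyFlux {d : ℕ} (η : ℝ) (H : (Fin d → ℝ) → (Fin d → ℝ) → ℝ)
    (𝔅 : Fin d → Fin d → ℝ) (U : ℤ → Fin d → ℝ) (j : ℤ) : ℝ :=
  (1/2) * (∑ i : Fin d, deltaH η H U (j-1) i * ∑ l : Fin d, 𝔅 i l * deltaH η H U j l)
    + ∑ i : Fin d, grad2 H (U (j-1)) (η • (U j - U (j-1))) i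
        * ((η/2) * ∑ l : Fin d, 𝔅 i l * (deltaH η H U (j+1) l - deltaH η H U (j-1) l))

private lemma clm_pi_apply {d : ℕ} (M : (Fin d → ℝ) →L[ℝ] ℝ) (v : Fin d → ℝ) :
    M v = ∑ i, v i * M (Pi.single i 1) := by
  have hs : ∀ i : Fin d, (Pi.single i 1 : Fin d → ℝ) = fun j => if i = j then 1 else 0 :=
    fun i => funext fun j => by simp [Pi.single_apply, eq_comm]
  have h := LinearMap.pi_apply_eq_sum_univ (M.toLinearMap) v
  simp only [hs]
  simpa [smul_eq_mul] using h

private lemma fderiv_pair_apply {d : ℕ} {H : (Fin d → ℝ) → (Fin d → ℝ) → ℝ}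
    (hH : ContDiff ℝ 1 (fun p : (Fin d → ℝ) × (Fin d → ℝ) => H p.1 p.2))
    (a b v w : Fin d → ℝ) :
    fderiv ℝ (fun p : (Fin d → ℝ) × (Fin d → ℝ) => H p.1 p.2) (a, b) (v, w)
      = ∑ i, grad1 H a b i * v i + ∑ i, grad2 H a b i * w i := by
  set L := fderiv ℝ (fun p : (Fin d → ℝ) × (Fin d → ℝ) => H p.1 p.2) (a, b) with hLdef
  have hL : HasFDerivAt (fun p : (Fin d → ℝ) × (Fin d → ℝ) => H p.1 p.2) L (a, b) :=
    ((hH.differentiable one_ne_zero) (a, b)).hasFDerivAt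
  have h1 : ∀ i, grad1 H a b i = L (Pi.single i 1, 0) := by
    intro i
    have hc : HasFDerivAt (fun x => H x b)
        (L.comp (ContinuousLinearMap.inl ℝ (Fin d → ℝ) (Fin d → ℝ))) a :=
      hL.comp a (f := fun e => (e, b)) (hasFDerivAt_prodMk_left a b)
    rw [grad1, hc.fderiv]
    rfl
  have h2 : ∀ i, grad2 H a b i = L (0, Pi.single i 1) := by
    intro i
    have hc : HasFDerivAt (fun y => H a y)
        (L.comp (ContinuousLinearMap.inr ℝ (Fin d → ℝ) (Fin d → ℝ))) b :=
      hL.comp b (f := fun y => (a, y)) (hasFDerivAt_prodMk_right a b)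
    rw [grad2, hc.fderiv]
    rfl
  have hsplit : (v, w) = ((v, 0) : (Fin d → ℝ) × (Fin d → ℝ)) + (0, w) := by
    simp
  rw [hsplit, map_add]
  have hv : L (v, (0 : Fin d → ℝ))
      = (L.comp (ContinuousLinearMap.inl ℝ (Fin d → ℝ) (Fin d → ℝ))) v := rfl
  have hw : L ((0 : Fin d → ℝ), w)
      = (L.comp (ContinuousLinearMap.inr ℝ (Fin d → ℝ) (Fin d → ℝ))) w := rfl
  rw [hv, hw, clm_pi_apply, clm_pi_apply]
  congr 1
  · exact Finset.sum_congr rfl fun i _ => by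
      simp [h1 i, ContinuousLinearMap.comp_apply, mul_comm]
  · exact Finset.sum_congr rfl fun i _ => by
      simp [h2 i, ContinuousLinearMap.comp_apply, mul_comm]

private lemma sum_factor {d : ℕ} (c : ℝ) (f g : Fin d → ℝ) :
    ∑ i, f i * (c * g i) = c * ∑ i, f i * g i := by
  rw [Finset.mul_sum]; exact Finset.sum_congr rfl fun i _ => by ring

private lemma sum_factor2 {d : ℕ} (c1 c2 : ℝ) (f g h : Fin d → ℝ) :
    ∑ i, f i * (c1 * (c2 * g i - c2 * h i))
      = c1 * c2 * (∑ i, f i * g i) - c1 * c2 * ∑ i, f i * h i := by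
  rw [Finset.mul_sum, Finset.mul_sum, ← Finset.sum_sub_distrib]
  exact Finset.sum_congr rfl fun i _ => by ring

private lemma swap_sum {d : ℕ} (𝔅 : Fin d → Fin d → ℝ) (hsym : ∀ i l, 𝔅 i l = 𝔅 l i)
    (x y : Fin d → ℝ) :
    ∑ i, x i * ∑ l, 𝔅 i l * y l = ∑ i, y i * ∑ l, 𝔅 i l * x l := by
  simp only [Finset.mul_sum]
  rw [Finset.sum_comm]
  exact Finset.sum_congr rfl fun i _ => Finset.sum_congr rfl fun l _ => by
    rw [hsym l i]; ring

private lemma algebra_step {d : ℕ} (η : ℝ) (𝔅 : Fin d → Fin d → ℝ)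
    (hsym : ∀ i l, 𝔅 i l = 𝔅 l i)
    (F G Gm δm δj δp δpp : Fin d → ℝ)
    (hδ : ∀ i, δj i = F i + η * (Gm i - G i)) :
    η * (((1/2) * (∑ i, δj i * ∑ l, 𝔅 i l * δp l)
          + ∑ i, G i * ((η/2) * ∑ l, 𝔅 i l * (δpp l - δj l)))
        - ((1/2) * (∑ i, δm i * ∑ l, 𝔅 i l * δj l)
          + ∑ i, Gm i * ((η/2) * ∑ l, 𝔅 i l * (δp l - δm l))))
    = ∑ i, F i * ((η/2) * ∑ l, 𝔅 i l * (δp l - δm l))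
      + ∑ i, G i * (η * ((η/2) * (∑ l, 𝔅 i l * (δpp l - δj l))
          - (η/2) * ∑ l, 𝔅 i l * (δp l - δm l))) := by
  have hkey : ∑ i, δj i * ∑ l, 𝔅 i l * (δp l - δm l)
      = (∑ i, δj i * ∑ l, 𝔅 i l * δp l) - ∑ i, δm i * ∑ l, 𝔅 i l * δj l := by
    rw [← swap_sum 𝔅 hsym δj δm, ← Finset.sum_sub_distrib]
    refine Finset.sum_congr rfl fun i _ => ?_
    have : ∑ l, 𝔅 i l * (δp l - δm l)
        = (∑ l, 𝔅 i l * δp l) - ∑ l, 𝔅 i l * δm l := by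
      rw [← Finset.sum_sub_distrib]
      exact Finset.sum_congr rfl fun l _ => by ring
    rw [this]; ring
  have hδsum : ∑ i, δj i * ∑ l, 𝔅 i l * (δp l - δm l)
      = (∑ i, F i * ∑ l, 𝔅 i l * (δp l - δm l))
        + η * (∑ i, Gm i * ∑ l, 𝔅 i l * (δp l - δm l))
        - η * ∑ i, G i * ∑ l, 𝔅 i l * (δp l - δm l) := by
    rw [Finset.mul_sum, Finset.mul_sum, ← Finset.sum_add_distrib, ← Finset.sum_sub_distrib]
    exact Finset.sum_congr rfl fun i _ => by rw [hδ i]; ring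
  rw [sum_factor ((η:ℝ)/2) G, sum_factor ((η:ℝ)/2) Gm, sum_factor ((η:ℝ)/2) F,
    sum_factor2 η (η/2) G]
  linear_combination (η/2) * hδsum - (η/2) * hkey

/-- Along any solution of the Hamiltonian lattice system `dU/dt = J δH[U]`,
the local conservation law
`d/dt H(U_j, η(U_{j+1}−U_j)) = η (s_{j+1} − s_j)` holds. -/
theorem hamiltonian_local_conservation_law
    (d : ℕ) (hd : 0 < d) (η : ℝ) (hη : 0 < η)
    (H : (Fin d → ℝ) → (Fin d → ℝ) → ℝ)
    (hH : ContDiff ℝ 1 (fun p : (Fin d → ℝ) × (Fin d → ℝ) => H p.1 p.2))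
    (𝔅 : Fin d → Fin d → ℝ) (hsym : ∀ i l : Fin d, 𝔅 i l = 𝔅 l i)
    (U : ℝ → ℤ → Fin d → ℝ)
    (hU : ∀ (j : ℤ) (t : ℝ), HasDerivAt (fun t' => U t' j)
      ((η/2) • fun i : Fin d => ∑ l : Fin d,
        𝔅 i l * (deltaH η H (U t) (j+1) l - deltaH η H (U t) (j-1) l)) t) :
    ∀ (j : ℤ) (t : ℝ), HasDerivAt (fun t' => H (U t' j) (η • (U t' (j+1) - U t' j)))
      (η * (energyFlux η H 𝔅 (U t) (j+1) - energyFlux η H 𝔅 (U t) j)) t := by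
  intro j t
  have e1 : j + 1 - 1 = j := add_sub_cancel_right j 1
  have hx := hU j t
  have hp := hU (j+1) t
  rw [e1] at hp
  have hy : HasDerivAt (fun t' => η • (U t' (j+1) - U t' j))
      (η • (((η/2) • fun i : Fin d => ∑ l : Fin d,
          𝔅 i l * (deltaH η H (U t) (j+1+1) l - deltaH η H (U t) j l))
        - (η/2) • fun i : Fin d => ∑ l : Fin d,
          𝔅 i l * (deltaH η H (U t) (j+1) l - deltaH η H (U t) (j-1) l))) t :=
    (hp.sub hx).const_smul η
  have hxy := hx.prodMk hy
  have hL : HasFDerivAt (fun p : (Fin d → ℝ) × (Fin d → ℝ) => H p.1 p.2)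
      (fderiv ℝ (fun p : (Fin d → ℝ) × (Fin d → ℝ) => H p.1 p.2)
        (U t j, η • (U t (j+1) - U t j)))
      (U t j, η • (U t (j+1) - U t j)) :=
    ((hH.differentiable one_ne_zero) _).hasFDerivAt
  have hcomp := hL.comp_hasDerivAt t hxy
  rw [fderiv_pair_apply hH] at hcomp
  have hδ : ∀ i, deltaH η H (U t) j i
      = grad1 H (U t j) (η • (U t (j+1) - U t j)) i
        + η * (grad2 H (U t (j-1)) (η • (U t j - U t (j-1))) i
          - grad2 H (U t j) (η • (U t (j+1) - U t j)) i) := by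
    intro i
    simp [deltaH]
  have hval : η * (energyFlux η H 𝔅 (U t) (j+1) - energyFlux η H 𝔅 (U t) j)
      = ∑ i, grad1 H (U t j) (η • (U t (j+1) - U t j)) i
            * (((η/2) • fun i : Fin d => ∑ l : Fin d,
              𝔅 i l * (deltaH η H (U t) (j+1) l - deltaH η H (U t) (j-1) l)) i)
        + ∑ i, grad2 H (U t j) (η • (U t (j+1) - U t j)) i
            * ((η • (((η/2) • fun i : Fin d => ∑ l : Fin d,
                𝔅 i l * (deltaH η H (U t) (j+1+1) l - deltaH η H (U t) j l))
              - (η/2) • fun i : Fin d => ∑ l : Fin d,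
                𝔅 i l * (deltaH η H (U t) (j+1) l - deltaH η H (U t) (j-1) l))) i) := by
    simp only [energyFlux, e1, Pi.smul_apply, Pi.sub_apply, smul_eq_mul]
    exact algebra_step η 𝔅 hsym _ _ _ _ _ _ _ hδ
  rw [hval]
  exact hcomp
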